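/- Let (X,𝒜,ν) be a finite measure space, let C be the set of all nonnegative measurable functions on X, define the concave functional φ : C → ℝ by φ(f) = ∫_X f/(1+f) dν, let μ = (μ₁,…,μ_m) and λ = (λ₁,…,λ_n) be probability vectors, ω₁ and ω₂ two weight functions with respect to μ and λ, and f₁,…,fₙ ∈ C. Then ∑_{j=1}^n λⱼφ(fⱼ) ≤ ν(X) − ∑_{i=1}^m μᵢ ‖L^{-1}(1+∑_{j=1}^n ω₁(i,j)λⱼfⱼ, 1+∑_{j=1}^n ω₂(i,j)λⱼfⱼ)‖_1 ≤ φ(∑_{j=1}^n λⱼfⱼ), where L is the logarithmic mean and L^{-1}(g,h) denotes the function x ↦ 1/L(g(x),h(x)). -/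

import Mathlib

open Finset MeasureTheory

/-- The logarithmic mean: `L(a,b) = a` if `a = b`, and `L(a,b) = (b-a)/(ln b - ln a)`
otherwise. -/
noncomputable def logMean (a b : ℝ) : ℝ :=
  if a = b then a else (b - a) / (Real.log b - Real.log a)


lemma log_lb {t : ℝ} (ht : 1 ≤ t) : 2 * (t - 1) / (t + 1) ≤ Real.log t := by
  have key : MonotoneOn (fun t : ℝ => Real.log t - 2 * (t - 1) / (t + 1)) (Set.Ici 1) := by
    apply monotoneOn_of_deriv_nonneg (convex_Ici 1)
    · apply ContinuousOn.sub
      · exact Real.continuousOn_log.mono (fun x hx => by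
          simp only [Set.mem_Ici] at hx; simp; positivity)
      · exact ContinuousOn.div (by fun_prop) (by fun_prop)
          (fun x hx => by simp only [Set.mem_Ici] at hx; positivity)
    · rw [interior_Ici]
      intro x hx
      simp only [Set.mem_Ioi] at hx
      have hx0 : (0:ℝ) < x := by linarith
      apply DifferentiableAt.differentiableWithinAt
      exact ((Real.differentiableAt_log hx0.ne').sub
        (((differentiableAt_id.sub_const 1).const_mul 2).div
          (differentiableAt_id.add_const 1) (by positivity)))
    · rw [interior_Ici]
      intro x hx
      simp only [Set.mem_Ioi] at hx
      have hx0 : (0:ℝ) < x := by linarith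
      have h1 := (((hasDerivAt_id x).sub_const 1).const_mul 2).div
          ((hasDerivAt_id x).add_const 1) (by positivity : (0:ℝ) < x + 1).ne'
      simp only [id_eq] at h1
      have h2 := (Real.hasDerivAt_log hx0.ne').sub h1
      rw [show deriv (fun t : ℝ => Real.log t - 2 * (t - 1) / (t + 1)) x = _ from h2.deriv]
      rw [sub_nonneg, div_le_iff₀ (by positivity), inv_mul_eq_div, le_div_iff₀ hx0]
      nlinarith
  have := key (by simp : (1:ℝ) ∈ Set.Ici 1) (Set.mem_Ici.2 ht) ht
  simp at this
  linarith

lemma log_ub {t : ℝ} (ht : 1 ≤ t) : Real.log t ≤ (t - 1/t) / 2 := by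
  have key : MonotoneOn (fun t : ℝ => (t - 1/t) / 2 - Real.log t) (Set.Ici 1) := by
    apply monotoneOn_of_deriv_nonneg (convex_Ici 1)
    · apply ContinuousOn.sub
      · exact ContinuousOn.div (ContinuousOn.sub continuousOn_id (ContinuousOn.div
          continuousOn_const continuousOn_id (fun x hx => by
            simp only [Set.mem_Ici] at hx; positivity))) continuousOn_const (by norm_num)
      · exact Real.continuousOn_log.mono (fun x hx => by
          simp only [Set.mem_Ici] at hx; simp; positivity)
    · rw [interior_Ici]
      intro x hx
      simp only [Set.mem_Ioi] at hx
      have hx0 : (0:ℝ) < x := by linarith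
      apply DifferentiableAt.differentiableWithinAt
      exact (((differentiableAt_id.sub
        ((differentiableAt_const 1).div differentiableAt_id hx0.ne')).div_const 2).sub
        (Real.differentiableAt_log hx0.ne'))
    · rw [interior_Ici]
      intro x hx
      simp only [Set.mem_Ioi] at hx
      have hx0 : (0:ℝ) < x := by linarith
      have h1 := (((hasDerivAt_id x).sub ((hasDerivAt_const x 1).div
          (hasDerivAt_id x) hx0.ne')).div_const 2)
      simp only [id_eq] at h1
      have h2 := h1.sub (Real.hasDerivAt_log hx0.ne')
      rw [show deriv (fun t : ℝ => (t - 1 / t) / 2 - Real.log t) x = _ from h2.deriv]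
      rw [sub_nonneg]
      have hx2 : (0:ℝ) < x^2 := by positivity
      rw [inv_eq_one_div, div_le_div_iff₀ hx0 (by norm_num)]
      have h4 : (1 - (0 * x - 1 * 1) / x ^ 2) * x = x + 1/x := by field_simp; ring
      rw [h4]
      have h5 : x + 1/x - 2 = (x-1)^2/x := by field_simp; ring
      nlinarith [div_nonneg (sq_nonneg (x-1)) hx0.le]
  have := key (by simp : (1:ℝ) ∈ Set.Ici 1) (Set.mem_Ici.2 ht) ht
  simp at this
  rw [one_div]
  linarith





lemma logMean_comm (a b : ℝ) : logMean a b = logMean b a := by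
  unfold logMean
  rcases eq_or_ne a b with h | h
  · simp [h]
  · rw [if_neg h, if_neg (Ne.symm h), ← neg_sub b a, ← neg_sub (Real.log b), neg_div_neg_eq]

lemma logMean_bounds_lt {a b : ℝ} (ha : 1 ≤ a) (hab : a < b) :
    2 * a * b / (a + b) ≤ logMean a b ∧ logMean a b ≤ (a + b) / 2 := by
  have ha0 : (0:ℝ) < a := by linarith
  have hb0 : (0:ℝ) < b := by linarith
  have ht : 1 ≤ b / a := (one_le_div ha0).2 hab.le
  have hlogpos : 0 < Real.log b - Real.log a := by
    rw [sub_pos]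
    exact Real.log_lt_log ha0 hab
  have hlog : Real.log b - Real.log a = Real.log (b / a) := by
    rw [Real.log_div hb0.ne' ha0.ne']
  rw [logMean, if_neg hab.ne]
  constructor
  · rw [div_le_div_iff₀ (by positivity) hlogpos]
    have h1 := log_ub ht
    have h2 : (b/a - 1/(b/a))/2 = (b^2 - a^2) / (2*a*b) := by
      field_simp
    rw [hlog]
    calc 2*a*b * Real.log (b/a) ≤ 2*a*b * ((b^2 - a^2)/(2*a*b)) := by
          apply mul_le_mul_of_nonneg_left _ (by positivity)
          rw [← h2]; exact h1
      _ = b^2 - a^2 := by field_simp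
      _ = (b - a)*(a + b) := by ring
  · rw [div_le_div_iff₀ hlogpos (by norm_num)]
    have h1 := log_lb ht
    have h2 : 2*(b/a - 1)/(b/a + 1) = 2*(b - a)/(a + b) := by
      rw [div_sub_one ha0.ne', div_add_one ha0.ne', ← mul_div_assoc]
      rw [div_div_div_cancel_right₀, add_comm b a]
      exact ha0.ne'
    rw [hlog]
    have h3 : 2*(b-a)/(a+b) ≤ Real.log (b/a) := h2 ▸ h1
    rw [div_le_iff₀ (by positivity : (0:ℝ) < a + b)] at h3
    linarith

lemma logMean_bounds {a b : ℝ} (ha : 1 ≤ a) (hb : 1 ≤ b) :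
    2 * a * b / (a + b) ≤ logMean a b ∧ logMean a b ≤ (a + b) / 2 := by
  rcases lt_trichotomy a b with h | h | h
  · exact logMean_bounds_lt ha h
  · subst h
    rw [logMean, if_pos rfl]
    constructor
    · rw [div_le_iff₀ (by positivity)]; nlinarith
    · linarith
  · have := logMean_bounds_lt hb h
    rw [logMean_comm] at this
    constructor
    · calc 2*a*b/(a+b) = 2*b*a/(b+a) := by ring_nf
        _ ≤ logMean a b := this.1
    · calc logMean a b ≤ (b+a)/2 := this.2
        _ = (a+b)/2 := by ring

lemma one_le_logMean {a b : ℝ} (ha : 1 ≤ a) (hb : 1 ≤ b) : 1 ≤ logMean a b := by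
  refine le_trans ?_ (logMean_bounds ha hb).1
  rw [le_div_iff₀ (by positivity)]
  nlinarith

-- Jensen for inverse
lemma inv_sum_le {n : ℕ} (w x : Fin n → ℝ) (hw : ∀ i, 0 ≤ w i) (h1 : ∑ i, w i = 1)
    (hx : ∀ i, 1 ≤ x i) : (∑ i, w i * x i)⁻¹ ≤ ∑ i, w i * (x i)⁻¹ := by
  have hconv : ConvexOn ℝ (Set.Ioi 0) (fun y : ℝ => y ^ (-1:ℤ)) :=
    (strictConvexOn_zpow (by norm_num) (by norm_num)).convexOn
  have := hconv.map_sum_le (t := Finset.univ) (w := w) (p := x)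
    (fun i _ => hw i) (by simpa using h1)
    (fun i _ => Set.mem_Ioi.2 (by linarith [hx i]))
  simpa [zpow_neg, smul_eq_mul] using this






lemma swap_sum {m n : ℕ} (μ : Fin m → ℝ) (ω : Fin m → Fin n → ℝ) (c : Fin n → ℝ)
    (hωμ : ∀ j, ∑ i, ω i j * μ i = 1) :
    ∑ i, μ i * ∑ j, ω i j * c j = ∑ j, c j := by
  simp_rw [Finset.mul_sum]
  rw [Finset.sum_comm]
  refine Finset.sum_congr rfl fun j _ => ?_
  have h : ∀ i, μ i * (ω i j * c j) = (ω i j * μ i) * c j := fun i => by ring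
  simp_rw [h, ← Finset.sum_mul, hωμ j, one_mul]

lemma pt_key {m n : ℕ} (μ : Fin m → ℝ) (lam : Fin n → ℝ)
    (hμ0 : ∀ i, 0 ≤ μ i) (hμ1 : ∑ i, μ i = 1)
    (hlam0 : ∀ j, 0 ≤ lam j)
    (ω₁ ω₂ : Fin m → Fin n → ℝ)
    (hω₁0 : ∀ i j, 0 ≤ ω₁ i j) (hω₁μ : ∀ j, ∑ i, ω₁ i j * μ i = 1)
    (hω₁lam : ∀ i, ∑ j, ω₁ i j * lam j = 1)
    (hω₂0 : ∀ i j, 0 ≤ ω₂ i j) (hω₂μ : ∀ j, ∑ i, ω₂ i j * μ i = 1)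
    (hω₂lam : ∀ i, ∑ j, ω₂ i j * lam j = 1)
    (a : Fin n → ℝ) (ha : ∀ j, 0 ≤ a j) :
    (1 + ∑ j, lam j * a j)⁻¹ ≤
        (∑ i, μ i * |(logMean (1 + ∑ j, ω₁ i j * lam j * a j)
          (1 + ∑ j, ω₂ i j * lam j * a j))⁻¹|) ∧
      (∑ i, μ i * |(logMean (1 + ∑ j, ω₁ i j * lam j * a j)
          (1 + ∑ j, ω₂ i j * lam j * a j))⁻¹|) ≤ ∑ j, lam j * (1 + a j)⁻¹ := by
  set G : Fin m → ℝ := fun i => 1 + ∑ j, ω₁ i j * lam j * a j with hGdef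
  set H : Fin m → ℝ := fun i => 1 + ∑ j, ω₂ i j * lam j * a j with hHdef
  have hG1 : ∀ i, 1 ≤ G i := fun i => le_add_of_nonneg_right
    (Finset.sum_nonneg fun j _ => mul_nonneg (mul_nonneg (hω₁0 i j) (hlam0 j)) (ha j))
  have hH1 : ∀ i, 1 ≤ H i := fun i => le_add_of_nonneg_right
    (Finset.sum_nonneg fun j _ => mul_nonneg (mul_nonneg (hω₂0 i j) (hlam0 j)) (ha j))
  have hL1 : ∀ i, 1 ≤ logMean (G i) (H i) := fun i => one_le_logMean (hG1 i) (hH1 i)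
  have hL0 : ∀ i, 0 < logMean (G i) (H i) := fun i => lt_of_lt_of_le one_pos (hL1 i)
  have habs : ∀ i, |(logMean (G i) (H i))⁻¹| = (logMean (G i) (H i))⁻¹ := fun i =>
    abs_of_nonneg (inv_nonneg.2 (hL0 i).le)
  simp only [hGdef, hHdef] at habs
  simp only [habs]
  have hGrep : ∀ i, G i = ∑ j, (ω₁ i j * lam j) * (1 + a j) := by
    intro i
    simp only [hGdef, mul_add, mul_one, Finset.sum_add_distrib, hω₁lam i]
  have hHrep : ∀ i, H i = ∑ j, (ω₂ i j * lam j) * (1 + a j) := by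
    intro i
    simp only [hHdef, mul_add, mul_one, Finset.sum_add_distrib, hω₂lam i]
  have hμG : ∑ i, μ i * G i = 1 + ∑ j, lam j * a j := by
    have h1 := swap_sum μ ω₁ (fun j => lam j * a j) hω₁μ
    simp only [← mul_assoc] at h1
    simp only [hGdef, mul_add, mul_one, Finset.sum_add_distrib, hμ1, h1]
  have hμH : ∑ i, μ i * H i = 1 + ∑ j, lam j * a j := by
    have h1 := swap_sum μ ω₂ (fun j => lam j * a j) hω₂μ
    simp only [← mul_assoc] at h1
    simp only [hHdef, mul_add, mul_one, Finset.sum_add_distrib, hμ1, h1]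
  constructor
  · -- lower bound
    have hsum : ∑ i, μ i * ((G i + H i)/2) = 1 + ∑ j, lam j * a j := by
      have h : ∀ i, μ i * ((G i + H i)/2) = (μ i * G i)/2 + (μ i * H i)/2 := fun i => by ring
      simp only [h, Finset.sum_add_distrib, ← Finset.sum_div, hμG, hμH]
      ring
    calc (1 + ∑ j, lam j * a j)⁻¹ = (∑ i, μ i * ((G i + H i)/2))⁻¹ := by rw [hsum]
      _ ≤ ∑ i, μ i * ((G i + H i)/2)⁻¹ := by
          apply inv_sum_le _ _ hμ0 hμ1
          intro i
          rw [le_div_iff₀ (by norm_num : (0:ℝ) < 2)]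
          have := hG1 i; have := hH1 i
          linarith
      _ ≤ ∑ i, μ i * (logMean (G i) (H i))⁻¹ := by
          apply Finset.sum_le_sum
          intro i _
          apply mul_le_mul_of_nonneg_left _ (hμ0 i)
          exact inv_anti₀ (hL0 i) (logMean_bounds (hG1 i) (hH1 i)).2
  · -- upper bound
    have hGH0 : ∀ i, (0:ℝ) < G i := fun i => lt_of_lt_of_le one_pos (hG1 i)
    have hHH0 : ∀ i, (0:ℝ) < H i := fun i => lt_of_lt_of_le one_pos (hH1 i)
    calc ∑ i, μ i * (logMean (G i) (H i))⁻¹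
        ≤ ∑ i, μ i * ((∑ j, (ω₁ i j * lam j) * (1 + a j)⁻¹
            + ∑ j, (ω₂ i j * lam j) * (1 + a j)⁻¹)/2) := by
          apply Finset.sum_le_sum
          intro i _
          apply mul_le_mul_of_nonneg_left _ (hμ0 i)
          have hHM : 0 < 2 * G i * H i / (G i + H i) := by
            have := hGH0 i; have := hHH0 i; positivity
          have step1 : (logMean (G i) (H i))⁻¹ ≤ ((G i)⁻¹ + (H i)⁻¹)/2 := by
            have h1 := inv_anti₀ hHM (logMean_bounds (hG1 i) (hH1 i)).1
            have h2 : (2 * G i * H i / (G i + H i))⁻¹ = ((G i)⁻¹ + (H i)⁻¹)/2 := by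
              have := hGH0 i; have := hHH0 i
              rw [inv_div]
              field_simp
              ring
            rw [h2] at h1
            exact h1
          have stepG : (G i)⁻¹ ≤ ∑ j, (ω₁ i j * lam j) * (1 + a j)⁻¹ := by
            rw [hGrep i]
            exact inv_sum_le _ _ (fun j => mul_nonneg (hω₁0 i j) (hlam0 j)) (hω₁lam i)
              (fun j => le_add_of_nonneg_right (ha j))
          have stepH : (H i)⁻¹ ≤ ∑ j, (ω₂ i j * lam j) * (1 + a j)⁻¹ := by
            rw [hHrep i]
            exact inv_sum_le _ _ (fun j => mul_nonneg (hω₂0 i j) (hlam0 j)) (hω₂lam i)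
              (fun j => le_add_of_nonneg_right (ha j))
          calc (logMean (G i) (H i))⁻¹ ≤ ((G i)⁻¹ + (H i)⁻¹)/2 := step1
            _ ≤ (∑ j, (ω₁ i j * lam j) * (1 + a j)⁻¹
                + ∑ j, (ω₂ i j * lam j) * (1 + a j)⁻¹)/2 := by
                have := add_le_add stepG stepH
                linarith
      _ = ∑ j, lam j * (1 + a j)⁻¹ := by
          have h1 := swap_sum μ ω₁ (fun j => lam j * (1 + a j)⁻¹) hω₁μ
          have h2 := swap_sum μ ω₂ (fun j => lam j * (1 + a j)⁻¹) hω₂μ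
          simp only [← mul_assoc] at h1 h2
          have h : ∀ i, μ i * ((∑ j, (ω₁ i j * lam j) * (1 + a j)⁻¹
              + ∑ j, (ω₂ i j * lam j) * (1 + a j)⁻¹)/2)
              = (μ i * ∑ j, ω₁ i j * lam j * (1 + a j)⁻¹)/2
              + (μ i * ∑ j, ω₂ i j * lam j * (1 + a j)⁻¹)/2 := fun i => by ring
          rw [Finset.sum_congr rfl (fun i _ => h i), Finset.sum_add_distrib,
            ← Finset.sum_div, ← Finset.sum_div, h1, h2]
          ring





/-- Refinement of Jensen's inequality for the concave functional
`φ(f) = ∫ f/(1+f) dν` on nonnegative measurable functions on a finite measure space,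
via two weight functions and the logarithmic mean. -/
theorem concave_functional_refinement_logMean
    {X : Type*} [MeasurableSpace X] (ν : Measure X) [IsFiniteMeasure ν]
    {m n : ℕ} (μ : Fin m → ℝ) (lam : Fin n → ℝ)
    (hμ0 : ∀ i, 0 ≤ μ i) (hμ1 : ∑ i, μ i = 1)
    (hlam0 : ∀ j, 0 ≤ lam j) (hlam1 : ∑ j, lam j = 1)
    (ω₁ ω₂ : Fin m → Fin n → ℝ)
    (hω₁0 : ∀ i j, 0 ≤ ω₁ i j) (hω₁μ : ∀ j, ∑ i, ω₁ i j * μ i = 1)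
    (hω₁lam : ∀ i, ∑ j, ω₁ i j * lam j = 1)
    (hω₂0 : ∀ i j, 0 ≤ ω₂ i j) (hω₂μ : ∀ j, ∑ i, ω₂ i j * μ i = 1)
    (hω₂lam : ∀ i, ∑ j, ω₂ i j * lam j = 1)
    (f : Fin n → X → ℝ) (hfm : ∀ j, Measurable (f j)) (hf0 : ∀ j x, 0 ≤ f j x) :
    (∑ j, lam j * ∫ x, f j x / (1 + f j x) ∂ν) ≤
        (ν Set.univ).toReal -
          ∑ i, μ i *
            ∫ x, |(logMean (1 + ∑ j, ω₁ i j * lam j * f j x)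
                (1 + ∑ j, ω₂ i j * lam j * f j x))⁻¹| ∂ν ∧
      ((ν Set.univ).toReal -
          ∑ i, μ i *
            ∫ x, |(logMean (1 + ∑ j, ω₁ i j * lam j * f j x)
                (1 + ∑ j, ω₂ i j * lam j * f j x))⁻¹| ∂ν) ≤
        ∫ x, (∑ j, lam j * f j x) / (1 + ∑ j, lam j * f j x) ∂ν := by
  set νR := (ν Set.univ).toReal with hνR
  -- the logMean integrand functions
  set ℓ : Fin m → X → ℝ := fun i x => |(logMean (1 + ∑ j, ω₁ i j * lam j * f j x)
      (1 + ∑ j, ω₂ i j * lam j * f j x))⁻¹| with hℓdef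
  have hGm : ∀ i, Measurable (fun x => 1 + ∑ j, ω₁ i j * lam j * f j x) := fun i =>
    measurable_const.add (Finset.measurable_sum _ fun j _ => (hfm j).const_mul _)
  have hHm : ∀ i, Measurable (fun x => 1 + ∑ j, ω₂ i j * lam j * f j x) := fun i =>
    measurable_const.add (Finset.measurable_sum _ fun j _ => (hfm j).const_mul _)
  have hℓm : ∀ i, Measurable (ℓ i) := by
    intro i
    have h : (fun x => logMean (1 + ∑ j, ω₁ i j * lam j * f j x)
        (1 + ∑ j, ω₂ i j * lam j * f j x)) =
        fun x => if (1 + ∑ j, ω₁ i j * lam j * f j x) = (1 + ∑ j, ω₂ i j * lam j * f j x)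
          then (1 + ∑ j, ω₁ i j * lam j * f j x)
          else ((1 + ∑ j, ω₂ i j * lam j * f j x) - (1 + ∑ j, ω₁ i j * lam j * f j x)) /
            (Real.log (1 + ∑ j, ω₂ i j * lam j * f j x)
              - Real.log (1 + ∑ j, ω₁ i j * lam j * f j x)) := rfl
    have hmeas : Measurable (fun x => logMean (1 + ∑ j, ω₁ i j * lam j * f j x)
        (1 + ∑ j, ω₂ i j * lam j * f j x)) := by
      rw [h]
      exact Measurable.ite (measurableSet_eq_fun (hGm i) (hHm i)) (hGm i)
        (((hHm i).sub (hGm i)).div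
          ((Real.measurable_log.comp (hHm i)).sub (Real.measurable_log.comp (hGm i))))
    exact hmeas.inv.abs
  have hG1 : ∀ i x, 1 ≤ 1 + ∑ j, ω₁ i j * lam j * f j x := fun i x =>
    le_add_of_nonneg_right (Finset.sum_nonneg fun j _ =>
      mul_nonneg (mul_nonneg (hω₁0 i j) (hlam0 j)) (hf0 j x))
  have hH1 : ∀ i x, 1 ≤ 1 + ∑ j, ω₂ i j * lam j * f j x := fun i x =>
    le_add_of_nonneg_right (Finset.sum_nonneg fun j _ =>
      mul_nonneg (mul_nonneg (hω₂0 i j) (hlam0 j)) (hf0 j x))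
  have hℓbd : ∀ i x, ℓ i x ≤ 1 ∧ 0 ≤ ℓ i x := by
    intro i x
    have h1 := one_le_logMean (hG1 i x) (hH1 i x)
    constructor
    · rw [hℓdef]
      simp only [abs_inv]
      rw [abs_of_nonneg (by linarith)]
      exact inv_le_one_of_one_le₀ h1
    · exact abs_nonneg _
  have hℓint : ∀ i, Integrable (ℓ i) ν := by
    intro i
    refine (integrable_const (1:ℝ)).mono' (hℓm i).aestronglyMeasurable ?_
    filter_upwards with x
    rw [Real.norm_eq_abs, abs_of_nonneg (hℓbd i x).2]
    exact (hℓbd i x).1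
  -- inverse integrands
  have hcm : ∀ j, Measurable (fun x => (1 + f j x)⁻¹) := fun j =>
    (measurable_const.add (hfm j)).inv
  have hc1 : ∀ j x, (0:ℝ) < 1 + f j x := fun j x => by have := hf0 j x; linarith
  have hcint : ∀ j, Integrable (fun x => (1 + f j x)⁻¹) ν := by
    intro j
    refine (integrable_const (1:ℝ)).mono' (hcm j).aestronglyMeasurable ?_
    filter_upwards with x
    rw [Real.norm_eq_abs, abs_of_nonneg (inv_nonneg.2 (hc1 j x).le)]
    exact inv_le_one_of_one_le₀ (by have := hf0 j x; linarith)
  have hSm : Measurable (fun x => ∑ j, lam j * f j x) :=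
    Finset.measurable_sum _ fun j _ => (hfm j).const_mul _
  have hS0 : ∀ x, 0 ≤ ∑ j, lam j * f j x := fun x =>
    Finset.sum_nonneg fun j _ => mul_nonneg (hlam0 j) (hf0 j x)
  have hSinvm : Measurable (fun x => (1 + ∑ j, lam j * f j x)⁻¹) :=
    (measurable_const.add hSm).inv
  have hSint : Integrable (fun x => (1 + ∑ j, lam j * f j x)⁻¹) ν := by
    refine (integrable_const (1:ℝ)).mono' hSinvm.aestronglyMeasurable ?_
    filter_upwards with x
    rw [Real.norm_eq_abs, abs_of_nonneg (inv_nonneg.2 (by have := hS0 x; linarith))]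
    exact inv_le_one_of_one_le₀ (by have := hS0 x; linarith)
  -- integral identities  φ(g) = νR - ∫ (1+g)⁻¹
  have key1 : ∀ j, ∫ x, f j x / (1 + f j x) ∂ν = νR - ∫ x, (1 + f j x)⁻¹ ∂ν := by
    intro j
    have hpt : ∀ x, f j x / (1 + f j x) = 1 - (1 + f j x)⁻¹ := by
      intro x
      have h := hc1 j x
      field_simp
      ring
    simp_rw [hpt]
    rw [integral_sub (integrable_const 1) (hcint j), integral_const, smul_eq_mul, mul_one]
    rfl
  have key2 : ∫ x, (∑ j, lam j * f j x) / (1 + ∑ j, lam j * f j x) ∂ν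
      = νR - ∫ x, (1 + ∑ j, lam j * f j x)⁻¹ ∂ν := by
    have hpt : ∀ x, (∑ j, lam j * f j x) / (1 + ∑ j, lam j * f j x)
        = 1 - (1 + ∑ j, lam j * f j x)⁻¹ := by
      intro x
      have h : (0:ℝ) < 1 + ∑ j, lam j * f j x := by have := hS0 x; linarith
      field_simp
      ring
    simp_rw [hpt]
    rw [integral_sub (integrable_const 1) hSint, integral_const, smul_eq_mul, mul_one]
    rfl
  -- exchange sum and integral
  have hsumℓ : ∑ i, μ i * ∫ x, ℓ i x ∂ν = ∫ x, ∑ i, μ i * ℓ i x ∂ν := by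
    rw [integral_finset_sum _ (fun i _ => ((hℓint i).const_mul (μ i)))]
    exact Finset.sum_congr rfl fun i _ => (integral_const_mul _ _).symm
  have hsumc : ∑ j, lam j * ∫ x, (1 + f j x)⁻¹ ∂ν = ∫ x, ∑ j, lam j * (1 + f j x)⁻¹ ∂ν := by
    rw [integral_finset_sum _ (fun j _ => ((hcint j).const_mul (lam j)))]
    exact Finset.sum_congr rfl fun j _ => (integral_const_mul _ _).symm
  -- the two integral inequalities
  have ineqA : ∑ i, μ i * ∫ x, ℓ i x ∂ν ≤ ∑ j, lam j * ∫ x, (1 + f j x)⁻¹ ∂ν := by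
    rw [hsumℓ, hsumc]
    apply integral_mono (integrable_finset_sum _ fun i _ => (hℓint i).const_mul (μ i))
      (integrable_finset_sum _ fun j _ => (hcint j).const_mul (lam j))
    intro x
    exact (pt_key μ lam hμ0 hμ1 hlam0 ω₁ ω₂ hω₁0 hω₁μ hω₁lam hω₂0 hω₂μ hω₂lam
      (fun j => f j x) (fun j => hf0 j x)).2
  have ineqB : ∫ x, (1 + ∑ j, lam j * f j x)⁻¹ ∂ν ≤ ∑ i, μ i * ∫ x, ℓ i x ∂ν := by
    rw [hsumℓ]
    apply integral_mono hSint (integrable_finset_sum _ fun i _ => (hℓint i).const_mul (μ i))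
    intro x
    exact (pt_key μ lam hμ0 hμ1 hlam0 ω₁ ω₂ hω₁0 hω₁μ hω₁lam hω₂0 hω₂μ hω₂lam
      (fun j => f j x) (fun j => hf0 j x)).1
  constructor
  · calc ∑ j, lam j * ∫ x, f j x / (1 + f j x) ∂ν
        = ∑ j, lam j * (νR - ∫ x, (1 + f j x)⁻¹ ∂ν) :=
          Finset.sum_congr rfl fun j _ => by rw [key1 j]
      _ = νR - ∑ j, lam j * ∫ x, (1 + f j x)⁻¹ ∂ν := by
          simp only [mul_sub]
          rw [Finset.sum_sub_distrib, ← Finset.sum_mul, hlam1, one_mul]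
      _ ≤ νR - ∑ i, μ i * ∫ x, ℓ i x ∂ν := by linarith [ineqA]
  · rw [key2]
    have := ineqB
    simp only [hℓdef] at this ⊢
    linarith
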